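/- For every d-dimensional reflexive polytope P there exists a pairwise orthogonal set B of semisimple roots of P such that S = R ∩ lin_ℝ(B) (an S-root basis); in particular B is an ℝ-basis of lin_ℝ(S) and R ∩ lin_ℝ(S) = S, i.e., every root of P lying in the real linear span of the semisimple roots is itself semisimple. -/

import Mathlib

open Finset Set Pointwise

noncomputable section

/-- The standard pairing `⟨x, y⟩ = ∑ i, x i * y i` on `ℝ^d`. -/
def pairR {d : ℕ} (x y : Fin d → ℝ) : ℝ := ∑ i, x i * y i

/-- A point of `ℝ^d` is a lattice point if all its coordinates are integers. -/
def IsLatticePt {d : ℕ} (x : Fin d → ℝ) : Prop := ∀ i, ∃ n : ℤ, x i = (n : ℝ)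

/-- A lattice polytope: the convex hull of finitely many lattice points. -/
def IsLatticePolytope {d : ℕ} (P : Set (Fin d → ℝ)) : Prop :=
  ∃ V : Finset (Fin d → ℝ), (∀ x ∈ V, IsLatticePt x) ∧
    P = convexHull ℝ (V : Set (Fin d → ℝ))

/-- The dual polytope `P* = {y : ⟨x, y⟩ ≥ -1 for all x ∈ P}`. -/
def polarDual {d : ℕ} (P : Set (Fin d → ℝ)) : Set (Fin d → ℝ) :=
  {y | ∀ x ∈ P, -1 ≤ pairR x y}

/-- A reflexive polytope: a (full-dimensional) lattice polytope with `0` in its interior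
whose dual is again a lattice polytope. -/
def IsReflexive {d : ℕ} (P : Set (Fin d → ℝ)) : Prop :=
  IsLatticePolytope P ∧ (0 : Fin d → ℝ) ∈ interior P ∧ IsLatticePolytope (polarDual P)

/-- `F` is the facet of `P` with (unique) inner normal `η` normalized by `⟨η, F⟩ = -1`:
`F` is the part of `P` where the valid inequality `⟨η, ·⟩ ≥ -1` is tight, and `F` has
dimension `d - 1`. -/
def IsFacetNormal {d : ℕ} (P : Set (Fin d → ℝ)) (η : Fin d → ℝ)
    (F : Set (Fin d → ℝ)) : Prop :=
  (∀ x ∈ P, -1 ≤ pairR η x) ∧ F = {x ∈ P | pairR η x = -1} ∧ F.Nonempty ∧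
    Module.finrank ℝ (vectorSpan ℝ F) = d - 1

/-- `F` is a facet ((d-1)-dimensional face) of `P`. -/
def IsFacet {d : ℕ} (P F : Set (Fin d → ℝ)) : Prop := ∃ η, IsFacetNormal P η F

/-- A root of `P`: a lattice point in the relative interior of a facet of `P`. -/
def IsRoot {d : ℕ} (P : Set (Fin d → ℝ)) (m : Fin d → ℝ) : Prop :=
  IsLatticePt m ∧ ∃ F, IsFacet P F ∧ m ∈ intrinsicInterior ℝ F

/-- The facet `F_m` of `P` containing the root `m` in its relative interior
(for a root `m` there is exactly one such facet). -/
def rootFacet {d : ℕ} (P : Set (Fin d → ℝ)) (m : Fin d → ℝ) : Set (Fin d → ℝ) :=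
  ⋃₀ {F | IsFacet P F ∧ m ∈ intrinsicInterior ℝ F}

/-- The inner normal `η_m = η_{F_m}` of the facet of `P` containing the root `m`. -/
def rootNormal {d : ℕ} (P : Set (Fin d → ℝ)) (m : Fin d → ℝ) : Fin d → ℝ :=
  Classical.epsilon fun η => IsFacetNormal P η (rootFacet P m)

/-- The real extension of the `ℤ`-linear map on the lattice given by an integer matrix. -/
def intMatMap {d : ℕ} (A : Matrix (Fin d) (Fin d) ℤ) (x : Fin d → ℝ) : Fin d → ℝ :=
  (A.map (Int.cast : ℤ → ℝ)).mulVec x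

/-- `P` and `Q` are isomorphic as lattice polytopes: some `g ∈ GL_d(ℤ)` has real
extension mapping `P` onto `Q`. -/
def IsLatticeIso {d : ℕ} (P Q : Set (Fin d → ℝ)) : Prop :=
  ∃ A : Matrix (Fin d) (Fin d) ℤ, IsUnit A.det ∧ intMatMap A '' P = Q

end

section Basics
variable {d : ℕ}

lemma pairR_comm (x y : Fin d → ℝ) : pairR x y = pairR y x :=
  Finset.sum_congr rfl fun i _ => mul_comm _ _

/-- `pairR x` as a linear map in the second variable. -/
def pairL (x : Fin d → ℝ) : (Fin d → ℝ) →ₗ[ℝ] ℝ where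
  toFun y := pairR x y
  map_add' y z := by
    unfold pairR
    rw [← Finset.sum_add_distrib]
    exact Finset.sum_congr rfl fun i _ => by simp [mul_add]
  map_smul' c y := by
    unfold pairR
    simp only [smul_eq_mul, RingHom.id_apply, Finset.mul_sum]
    exact Finset.sum_congr rfl fun i _ => by simp [Pi.smul_apply]; ring

@[simp] lemma pairL_apply (x y : Fin d → ℝ) : pairL x y = pairR x y := rfl

lemma pairR_add_right (x y z : Fin d → ℝ) : pairR x (y + z) = pairR x y + pairR x z :=
  (pairL x).map_add y z

lemma pairR_smul_right (x : Fin d → ℝ) (c : ℝ) (y : Fin d → ℝ) :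
    pairR x (c • y) = c * pairR x y := (pairL x).map_smul c y

lemma pairR_neg_right (x y : Fin d → ℝ) : pairR x (-y) = -pairR x y := by
  have := (pairL x).map_neg y; simpa using this

lemma pairR_sub_right (x y z : Fin d → ℝ) : pairR x (y - z) = pairR x y - pairR x z := by
  have := (pairL x).map_sub y z; simpa using this

lemma pairR_add_left (x y z : Fin d → ℝ) : pairR (x + y) z = pairR x z + pairR y z := by
  rw [pairR_comm, pairR_add_right, pairR_comm z x, pairR_comm z y]

lemma pairR_sub_left (x y z : Fin d → ℝ) : pairR (x - y) z = pairR x z - pairR y z := by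
  rw [pairR_comm, pairR_sub_right, pairR_comm z x, pairR_comm z y]

lemma pairR_self_eq_zero {x : Fin d → ℝ} (h : pairR x x = 0) : x = 0 := by
  have h2 := (Finset.sum_eq_zero_iff_of_nonneg
    (fun i _ => mul_self_nonneg (x i))).mp h
  funext i
  have := h2 i (Finset.mem_univ i)
  simpa [mul_self_eq_zero] using this

/-- Representation of a linear functional via `pairR`. -/
lemma pairR_rep (ψ : (Fin d → ℝ) →ₗ[ℝ] ℝ) (z : Fin d → ℝ) :
    pairR (fun i => ψ (Pi.single i 1)) z = ψ z := by
  conv_rhs => rw [show z = ∑ i, Pi.single i (z i) from (Finset.univ_sum_single z).symm]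
  rw [map_sum]
  refine Finset.sum_congr rfl fun i _ => ?_
  have h1 : (Pi.single i (z i) : Fin d → ℝ) = z i • (Pi.single i 1 : Fin d → ℝ) := by
    funext j; by_cases hj : i = j <;> simp [Pi.single_apply, hj]
  rw [h1, map_smul]
  simp [mul_comm]

lemma IsLatticePt.pairR_int {x y : Fin d → ℝ} (hx : IsLatticePt x) (hy : IsLatticePt y) :
    ∃ n : ℤ, pairR x y = (n : ℝ) := by
  choose nx hnx using hx
  choose ny hny using hy
  refine ⟨∑ i, nx i * ny i, ?_⟩
  unfold pairR
  push_cast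
  exact Finset.sum_congr rfl fun i _ => by rw [hnx i, hny i]

lemma IsLatticePt.add {x y : Fin d → ℝ} (hx : IsLatticePt x) (hy : IsLatticePt y) :
    IsLatticePt (x + y) := by
  intro i; obtain ⟨n, hn⟩ := hx i; obtain ⟨m, hm⟩ := hy i
  exact ⟨n + m, by push_cast; simp [hn, hm]⟩

lemma IsLatticePt.neg {x : Fin d → ℝ} (hx : IsLatticePt x) : IsLatticePt (-x) := by
  intro i; obtain ⟨n, hn⟩ := hx i; exact ⟨-n, by push_cast; simp [hn]⟩

lemma IsLatticePt.int_smul {x : Fin d → ℝ} (hx : IsLatticePt x) {c : ℝ} (hc : ∃ n : ℤ, c = n) :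
    IsLatticePt (c • x) := by
  intro i; obtain ⟨n, hn⟩ := hx i; obtain ⟨m, hm⟩ := hc
  exact ⟨m * n, by push_cast; simp [hn, hm]⟩

end Basics

section Polytope
variable {d : ℕ} {P : Set (Fin d → ℝ)} {V W : Finset (Fin d → ℝ)}

lemma pairR_smul_left (c : ℝ) (x y : Fin d → ℝ) : pairR (c • x) y = c * pairR x y := by
  rw [pairR_comm, pairR_smul_right, pairR_comm]

lemma pairR_neg_left (x y : Fin d → ℝ) : pairR (-x) y = -pairR x y := by
  rw [pairR_comm, pairR_neg_right, pairR_comm]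

lemma P_convex (hPV : P = convexHull ℝ (V : Set (Fin d → ℝ))) : Convex ℝ P :=
  hPV ▸ convex_convexHull ℝ _

lemma P_compact (hPV : P = convexHull ℝ (V : Set (Fin d → ℝ))) : IsCompact P :=
  hPV ▸ V.finite_toSet.isCompact_convexHull ℝ

lemma P_closed (hPV : P = convexHull ℝ (V : Set (Fin d → ℝ))) : IsClosed P :=
  (P_compact hPV).isClosed

lemma W_subset_dual (hPW : polarDual P = convexHull ℝ (W : Set (Fin d → ℝ))) :
    ∀ η ∈ W, η ∈ polarDual P := by
  intro η hη
  rw [hPW]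
  exact subset_convexHull ℝ _ hη

lemma dual_pair {y x : Fin d → ℝ} (hy : y ∈ polarDual P) (hx : x ∈ P) : -1 ≤ pairR y x := by
  rw [pairR_comm]; exact hy x hx

/-- The bipolar theorem: membership in `P` is detected by the vertices of the dual. -/
lemma mem_P_iff (hPV : P = convexHull ℝ (V : Set (Fin d → ℝ)))
    (h0 : (0 : Fin d → ℝ) ∈ interior P)
    (hPW : polarDual P = convexHull ℝ (W : Set (Fin d → ℝ))) (x : Fin d → ℝ) :
    x ∈ P ↔ ∀ η ∈ W, -1 ≤ pairR η x := by
  constructor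
  · intro hx η hη
    exact dual_pair (W_subset_dual hPW η hη) hx
  · intro h
    by_contra hx
    obtain ⟨f, u, hfP, hfx⟩ := geometric_hahn_banach_closed_point (P_convex hPV)
      (P_closed hPV) hx
    have h0P : (0 : Fin d → ℝ) ∈ P := interior_subset h0
    have hu : 0 < u := by have := hfP 0 h0P; simpa using this
    set η₀ : Fin d → ℝ := fun i => f (Pi.single i 1) with hη₀
    have hrep : ∀ y, pairR η₀ y = f y := by
      intro y
      exact pairR_rep (f : (Fin d → ℝ) →ₗ[ℝ] ℝ) y
    set η : Fin d → ℝ := (-(u⁻¹)) • η₀ with hη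
    have hpairη : ∀ y, pairR η y = -(f y / u) := by
      intro y
      rw [hη, pairR_smul_left, hrep]
      field_simp
    have hηdual : η ∈ polarDual P := by
      intro y hy
      rw [pairR_comm, hpairη]
      have h1 : f y / u ≤ 1 := le_of_lt ((div_lt_one hu).mpr (hfP y hy))
      linarith
    have hηhull : η ∈ convexHull ℝ (W : Set (Fin d → ℝ)) := hPW ▸ hηdual
    have hconv : Convex ℝ {z : Fin d → ℝ | -1 ≤ pairR z x} := by
      refine convex_halfSpace_ge ⟨fun a b => pairR_add_left a b x, fun c a => ?_⟩ (-1)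
      simp [pairR_smul_left]
    have hsub : (W : Set (Fin d → ℝ)) ⊆ {z | -1 ≤ pairR z x} := fun η' hη' => h η' hη'
    have hle : -1 ≤ pairR η x := convexHull_min hsub hconv hηhull
    rw [hpairη] at hle
    have h2 : (1:ℝ) < f x / u := (one_lt_div hu).mpr hfx
    linarith

lemma span_W_top (hPV : P = convexHull ℝ (V : Set (Fin d → ℝ)))
    (h0 : (0 : Fin d → ℝ) ∈ interior P)
    (hPW : polarDual P = convexHull ℝ (W : Set (Fin d → ℝ))) :
    Submodule.span ℝ (W : Set (Fin d → ℝ)) = ⊤ := by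
  by_contra hne
  obtain ⟨y, -, hy⟩ := SetLike.exists_of_lt
    (lt_top_iff_ne_top.mpr hne : Submodule.span ℝ (W : Set (Fin d → ℝ)) < ⊤)
  set p := Submodule.span ℝ (W : Set (Fin d → ℝ))
  have hmk : p.mkQ y ≠ 0 := by
    rw [Submodule.mkQ_apply, ne_eq, Submodule.Quotient.mk_eq_zero]
    exact hy
  obtain ⟨φ, hφ⟩ : ∃ φ : Module.Dual ℝ ((Fin d → ℝ) ⧸ p), φ (p.mkQ y) ≠ 0 := by
    by_contra hφ
    push_neg at hφ
    exact hmk ((Module.forall_dual_apply_eq_zero_iff ℝ _).mp hφ)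
  set ψ : (Fin d → ℝ) →ₗ[ℝ] ℝ := φ ∘ₗ p.mkQ
  set u : Fin d → ℝ := fun i => ψ (Pi.single i 1) with hu
  have hrep : ∀ z, pairR u z = ψ z := fun z => pairR_rep ψ z
  have hW0 : ∀ η ∈ W, pairR η u = 0 := by
    intro η hη
    rw [pairR_comm, hrep]
    have : η ∈ p := Submodule.subset_span hη
    simp [ψ, Submodule.mkQ_apply, (Submodule.Quotient.mk_eq_zero p).mpr this]
  have hu0 : u ≠ 0 := by
    intro h
    apply hφ
    have := hrep y
    rw [h] at this
    simp [pairR] at this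
    simpa [ψ] using this.symm
  have hmem : ∀ t : ℝ, t • u ∈ P := by
    intro t
    rw [mem_P_iff hPV h0 hPW]
    intro η hη
    rw [pairR_smul_right, hW0 η hη]
    norm_num
  obtain ⟨C, hC⟩ := isBounded_iff_forall_norm_le.mp (P_compact hPV).isBounded
  have hCn : ‖u‖ ≠ 0 := by simpa using hu0
  have h1 := hC (((C+1)/‖u‖) • u) (hmem _)
  rw [norm_smul] at h1
  have hCpos : 0 ≤ C := le_trans (norm_nonneg _) (hC 0 (interior_subset h0))
  rw [Real.norm_eq_abs, abs_of_pos (by positivity : (0:ℝ) < (C+1)/‖u‖),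
    div_mul_cancel₀ _ hCn] at h1
  linarith

lemma eq_of_pairW (hPV : P = convexHull ℝ (V : Set (Fin d → ℝ)))
    (h0 : (0 : Fin d → ℝ) ∈ interior P)
    (hPW : polarDual P = convexHull ℝ (W : Set (Fin d → ℝ)))
    {x y : Fin d → ℝ} (h : ∀ η ∈ W, pairR η x = pairR η y) : x = y := by
  have hker : (W : Set (Fin d → ℝ)) ⊆ (LinearMap.ker (pairL (x - y)) : Set (Fin d → ℝ)) := by
    intro η hη
    simp only [SetLike.mem_coe, LinearMap.mem_ker, pairL_apply]
    rw [pairR_sub_left, pairR_comm x η, pairR_comm y η, h η hη, sub_self]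
  have : Submodule.span ℝ (W : Set (Fin d → ℝ)) ≤ LinearMap.ker (pairL (x - y)) :=
    Submodule.span_le.mpr hker
  rw [span_W_top hPV h0 hPW, top_le_iff] at this
  have hxy : pairR (x - y) (x - y) = 0 := by
    have : (x - y) ∈ LinearMap.ker (pairL (x - y)) := this ▸ Submodule.mem_top
    simpa using this
  have := pairR_self_eq_zero hxy
  exact sub_eq_zero.mp this

end Polytope

section Roots
variable {d : ℕ} {P : Set (Fin d → ℝ)} {V W : Finset (Fin d → ℝ)} {v : Fin d → ℝ}

/-- Minimum principle: a linear functional bounded below by `-1` on `F` and attaining `-1`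
at a point of the intrinsic interior of `F` is identically `-1` on `F`. -/
lemma relint_min {F : Set (Fin d → ℝ)} {m x η : Fin d → ℝ}
    (hm : m ∈ intrinsicInterior ℝ F) (hx : x ∈ F)
    (hval : ∀ z ∈ F, -1 ≤ pairR η z) (hm1 : pairR η m = -1) :
    pairR η x = -1 := by
  obtain ⟨y, hy, rfl⟩ := hm
  have hxA : x ∈ affineSpan ℝ F := subset_affineSpan ℝ F hx
  have hmem : ∀ t : ℝ, t • ((y : Fin d → ℝ) - x) + (y : Fin d → ℝ) ∈ affineSpan ℝ F := by
    intro t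
    have := (affineSpan ℝ F).smul_vsub_vadd_mem t y.2 hxA y.2
    simpa [vsub_eq_sub, vadd_eq_add] using this
  set γ : ℝ → (affineSpan ℝ F) := fun t => ⟨t • ((y : Fin d → ℝ) - x) + (y : Fin d → ℝ),
    hmem t⟩ with hγ
  have hcont : Continuous γ := by
    apply Continuous.subtype_mk
    exact (continuous_id.smul continuous_const).add continuous_const
  have hγ0 : γ 0 = y := by
    apply Subtype.ext
    simp [hγ]
  have hopen : IsOpen (γ ⁻¹' interior ((↑) ⁻¹' F : Set (affineSpan ℝ F))) :=
    isOpen_interior.preimage hcont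
  have h0mem : (0 : ℝ) ∈ γ ⁻¹' interior ((↑) ⁻¹' F : Set (affineSpan ℝ F)) := by
    simp only [Set.mem_preimage, hγ0]; exact hy
  obtain ⟨ε, hε, hball⟩ := Metric.isOpen_iff.mp hopen 0 h0mem
  have htpos : 0 < ε / 2 := by positivity
  have htmem : ε / 2 ∈ γ ⁻¹' interior ((↑) ⁻¹' F : Set (affineSpan ℝ F)) := by
    apply hball
    have : dist (ε/2) 0 < ε := by
      rw [Real.dist_eq, sub_zero, abs_of_pos htpos]; linarith
    exact this
  have hzF : (ε/2) • ((y : Fin d → ℝ) - x) + (y : Fin d → ℝ) ∈ F := by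
    have h1 : γ (ε/2) ∈ ((↑) ⁻¹' F : Set (affineSpan ℝ F)) := interior_subset htmem
    exact h1
  have hval' := hval _ hzF
  rw [pairR_add_right, pairR_smul_right, pairR_sub_right, hm1] at hval'
  have hx1 := hval x hx
  nlinarith

lemma facet_eq {F F' : Set (Fin d → ℝ)} {m : Fin d → ℝ}
    (h : IsFacet P F ∧ m ∈ intrinsicInterior ℝ F)
    (h' : IsFacet P F' ∧ m ∈ intrinsicInterior ℝ F') : F = F' := by
  obtain ⟨⟨η, hηv, hηF, -, -⟩, hrel⟩ := h
  obtain ⟨⟨η', hηv', hηF', -, -⟩, hrel'⟩ := h'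
  have key : ∀ (G G' : Set (Fin d → ℝ)) (e e' : Fin d → ℝ),
      (∀ x ∈ P, -1 ≤ pairR e x) → G = {x ∈ P | pairR e x = -1} →
      (∀ x ∈ P, -1 ≤ pairR e' x) → G' = {x ∈ P | pairR e' x = -1} →
      m ∈ intrinsicInterior ℝ G → m ∈ intrinsicInterior ℝ G' → G ⊆ G' := by
    intro G G' e e' hev heF hev' heF' hrelG hrelG'
    intro x hxG
    have hxP : x ∈ P := by rw [heF] at hxG; exact hxG.1
    have hmG' : m ∈ G' := intrinsicInterior_subset hrelG'
    have hm1 : pairR e' m = -1 := by rw [heF'] at hmG'; exact hmG'.2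
    have : pairR e' x = -1 :=
      relint_min hrelG hxG (fun z hz => hev' z (by rw [heF] at hz; exact hz.1)) hm1
    rw [heF']
    exact ⟨hxP, this⟩
  exact le_antisymm (key F F' η η' hηv hηF hηv' hηF' hrel hrel')
    (key F' F η' η hηv' hηF' hηv hηF hrel' hrel)

/-- For a root, `rootFacet` is a genuine facet containing the root in its
intrinsic interior, and `rootNormal` is a genuine facet normal for it. -/
lemma rootNormal_spec {m : Fin d → ℝ} (hm : IsRoot P m) :
    IsFacetNormal P (rootNormal P m) (rootFacet P m) ∧
      m ∈ intrinsicInterior ℝ (rootFacet P m) := by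
  obtain ⟨-, F0, hF0, hrel0⟩ := hm
  have hset : {F | IsFacet P F ∧ m ∈ intrinsicInterior ℝ F} = {F0} := by
    ext F
    simp only [Set.mem_setOf_eq, Set.mem_singleton_iff]
    constructor
    · rintro ⟨h1, h2⟩; exact facet_eq ⟨h1, h2⟩ ⟨hF0, hrel0⟩
    · rintro rfl; exact ⟨hF0, hrel0⟩
  have hrf : rootFacet P m = F0 := by
    rw [rootFacet, hset, Set.sUnion_singleton]
  obtain ⟨η0, hη0⟩ := hF0
  have hex : ∃ η, IsFacetNormal P η (rootFacet P m) := ⟨η0, hrf ▸ hη0⟩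
  exact ⟨Classical.epsilon_spec hex, hrf ▸ hrel0⟩

lemma root_mem_P {m : Fin d → ℝ} (hm : IsRoot P m) : m ∈ P := by
  obtain ⟨⟨-, hF, -, -⟩, hrel⟩ := rootNormal_spec hm
  have := intrinsicInterior_subset hrel
  rw [hF] at this
  exact this.1

lemma pair_rootNormal_self {m : Fin d → ℝ} (hm : IsRoot P m) :
    pairR (rootNormal P m) m = -1 := by
  obtain ⟨⟨-, hF, -, -⟩, hrel⟩ := rootNormal_spec hm
  have := intrinsicInterior_subset hrel
  rw [hF] at this
  exact this.2

lemma rootNormal_valid {m : Fin d → ℝ} (hm : IsRoot P m) :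
    ∀ x ∈ P, -1 ≤ pairR (rootNormal P m) x := (rootNormal_spec hm).1.1

lemma rootNormal_mem_dual {m : Fin d → ℝ} (hm : IsRoot P m) :
    rootNormal P m ∈ polarDual P := fun x hx => by
  rw [pairR_comm]; exact rootNormal_valid hm x hx

/-- `d ≥ 1` whenever a root exists. -/
lemma one_le_d {m : Fin d → ℝ} (hm : IsRoot P m) : 1 ≤ d := by
  by_contra hd
  push_neg at hd
  interval_cases d
  have := pair_rootNormal_self hm
  simp [pairR] at this
/-- Any dual point pairing to `-1` with a root equals the root's facet normal. -/
lemma eq_rootNormal (hPV : P = convexHull ℝ (V : Set (Fin d → ℝ)))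
    {y m : Fin d → ℝ} (hm : IsRoot P m) (hy : y ∈ polarDual P)
    (h1 : pairR y m = -1) : y = rootNormal P m := by
  obtain ⟨⟨hval, hF, -, hrank⟩, hrel⟩ := rootNormal_spec hm
  set η := rootNormal P m
  set F := rootFacet P m
  -- `pairR y ⬝` is identically `-1` on `F`
  have hyF : ∀ x ∈ F, pairR y x = -1 := by
    intro x hx
    exact relint_min hrel hx (fun z hz => dual_pair hy (by rw [hF] at hz; exact hz.1)) h1
  have hηF : ∀ x ∈ F, pairR η x = -1 := by
    intro x hx
    rw [hF] at hx; exact hx.2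
  have hm1 : pairR η m = -1 := pair_rootNormal_self hm
  -- the difference `w` kills `vectorSpan F` and `m`
  set w := y - η with hw
  have hker1 : vectorSpan ℝ F ≤ LinearMap.ker (pairL w) := by
    rw [vectorSpan_def, Submodule.span_le]
    rintro z ⟨a, ha, b, hb, rfl⟩
    simp only [SetLike.mem_coe, LinearMap.mem_ker, pairL_apply, vsub_eq_sub]
    have hwa : ∀ z ∈ F, pairR w z = 0 := by
      intro z hz
      rw [hw, pairR_sub_left, hyF z hz, hηF z hz]
      ring
    rw [pairR_sub_right, hwa a ha, hwa b hb]
    ring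
  have hkm : pairR w m = 0 := by
    rw [hw, pairR_sub_left, h1, hm1]; ring
  -- `m ∉ vectorSpan F` since `pairR η` kills `vectorSpan F` but not `m`
  have hηker : vectorSpan ℝ F ≤ LinearMap.ker (pairL η) := by
    rw [vectorSpan_def, Submodule.span_le]
    rintro z ⟨a, ha, b, hb, rfl⟩
    simp only [SetLike.mem_coe, LinearMap.mem_ker, pairL_apply, vsub_eq_sub]
    rw [pairR_sub_right, hηF a ha, hηF b hb]
    ring
  have hm0 : m ≠ 0 := by
    intro h
    rw [h] at hm1
    simp [pairR] at hm1
  have hinf : vectorSpan ℝ F ⊓ Submodule.span ℝ {m} = ⊥ := by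
    rw [Submodule.eq_bot_iff]
    intro z ⟨hz1, hz2⟩
    obtain ⟨c, rfl⟩ := Submodule.mem_span_singleton.mp hz2
    have h5 := hηker hz1
    rw [LinearMap.mem_ker, pairL_apply, pairR_smul_right, hm1] at h5
    have : c = 0 := by linarith
    simp [this]
  have hd : 1 ≤ d := one_le_d hm
  have hsup : vectorSpan ℝ F ⊔ Submodule.span ℝ {m} = ⊤ := by
    apply Submodule.eq_top_of_finrank_eq
    have h1 := Submodule.finrank_sup_add_finrank_inf_eq (vectorSpan ℝ F)
      (Submodule.span ℝ {m})
    rw [hinf] at h1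
    simp only [finrank_bot, add_zero] at h1
    rw [hrank, finrank_span_singleton hm0] at h1
    rw [h1, Module.finrank_pi]
    simp
    omega
  have hker : LinearMap.ker (pairL w) = ⊤ := by
    rw [eq_top_iff, ← hsup, sup_le_iff]
    constructor
    · exact hker1
    · rw [Submodule.span_le, Set.singleton_subset_iff]
      simp only [SetLike.mem_coe, LinearMap.mem_ker, pairL_apply]
      exact hkm
  have hww : pairR w w = 0 := by
    have : w ∈ LinearMap.ker (pairL w) := hker ▸ Submodule.mem_top
    simpa using this
  have := pairR_self_eq_zero hww
  rw [hw, sub_eq_zero] at this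
  exact this

/-- The facet normal of a root is a vertex of the dual polytope. -/
lemma rootNormal_mem_W (hPV : P = convexHull ℝ (V : Set (Fin d → ℝ)))
    (hPW : polarDual P = convexHull ℝ (W : Set (Fin d → ℝ)))
    {m : Fin d → ℝ} (hm : IsRoot P m) : rootNormal P m ∈ W := by
  set η := rootNormal P m
  have hdual : η ∈ convexHull ℝ (W : Set (Fin d → ℝ)) := hPW ▸ rootNormal_mem_dual hm
  rw [Finset.convexHull_eq] at hdual
  obtain ⟨c, hc0, hc1, hcm⟩ := hdual
  rw [Finset.centerMass_eq_of_sum_1 _ _ hc1] at hcm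
  have hmP : m ∈ P := root_mem_P hm
  have hpair : ∑ v ∈ W, c v * (pairR v m + 1) = 0 := by
    have h2 : pairR η m = -1 := pair_rootNormal_self hm
    have h3 : pairL m η = -1 := by rw [pairL_apply, pairR_comm]; exact h2
    rw [← hcm] at h3
    rw [map_sum] at h3
    simp only [map_smul, pairL_apply, smul_eq_mul, id] at h3
    have : ∑ v ∈ W, c v * (pairR v m + 1) =
        (∑ v ∈ W, c v * pairR m v) + ∑ v ∈ W, c v := by
      rw [← Finset.sum_add_distrib]
      exact Finset.sum_congr rfl fun v _ => by rw [pairR_comm m v]; ring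
    rw [this, h3, hc1]
    ring
  have hterm : ∀ v ∈ W, c v * (pairR v m + 1) = 0 := by
    intro v hv
    refine (Finset.sum_eq_zero_iff_of_nonneg ?_).mp hpair v hv
    intro i hi
    have h4 : -1 ≤ pairR i m := dual_pair (W_subset_dual hPW i hi) hmP
    have := hc0 i hi
    nlinarith
  obtain ⟨v0, hv0W, hv0⟩ : ∃ v0 ∈ W, c v0 ≠ 0 := by
    by_contra hall
    push_neg at hall
    rw [Finset.sum_eq_zero (fun v hv => hall v hv)] at hc1
    norm_num at hc1
  have hv0m : pairR v0 m = -1 := by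
    have := hterm v0 hv0W
    rcases mul_eq_zero.mp this with h | h
    · exact absurd h hv0
    · linarith
  have : v0 = η := eq_rootNormal hPV hm (W_subset_dual hPW v0 hv0W) hv0m
  rw [← this]
  exact hv0W

lemma rootNormal_lattice (hPV : P = convexHull ℝ (V : Set (Fin d → ℝ)))
    (hW : ∀ x ∈ W, IsLatticePt x)
    (hPW : polarDual P = convexHull ℝ (W : Set (Fin d → ℝ)))
    {m : Fin d → ℝ} (hm : IsRoot P m) : IsLatticePt (rootNormal P m) :=
  hW _ (rootNormal_mem_W hPV hPW hm)

/-- A vertex of the dual other than the root's normal pairs nonnegatively with the root. -/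
lemma pair_nonneg_of_ne_rootNormal (hPV : P = convexHull ℝ (V : Set (Fin d → ℝ)))
    (hW : ∀ x ∈ W, IsLatticePt x)
    (hPW : polarDual P = convexHull ℝ (W : Set (Fin d → ℝ)))
    {m η : Fin d → ℝ} (hm : IsRoot P m) (hη : η ∈ W)
    (hne : η ≠ rootNormal P m) : 0 ≤ pairR η m := by
  have h1 : -1 ≤ pairR η m := dual_pair (W_subset_dual hPW η hη) (root_mem_P hm)
  obtain ⟨n, hn⟩ := (hW η hη).pairR_int hm.1
  have h2 : pairR η m ≠ -1 := by
    intro h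
    exact hne (eq_rootNormal hPV hm (W_subset_dual hPW η hη) h)
  rw [hn] at h1 h2 ⊢
  have : (-1 : ℝ) = ((-1 : ℤ) : ℝ) := by norm_num
  rw [this] at h1 h2
  have hn1 : (-1 : ℤ) ≤ n := by exact_mod_cast h1
  have hn2 : n ≠ -1 := by intro h; subst h; exact h2 rfl
  have : (0 : ℤ) ≤ n := by omega
  exact_mod_cast this

/-- Moving a point of `P` in a root direction stays in `P`. -/
lemma move_mem (hPV : P = convexHull ℝ (V : Set (Fin d → ℝ)))
    (h0 : (0 : Fin d → ℝ) ∈ interior P)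
    (hW : ∀ x ∈ W, IsLatticePt x)
    (hPW : polarDual P = convexHull ℝ (W : Set (Fin d → ℝ)))
    {v x : Fin d → ℝ} (hv : IsRoot P v) (hx : x ∈ P) {t : ℝ} (ht0 : 0 ≤ t)
    (ht1 : t ≤ pairR (rootNormal P v) x + 1) : x + t • v ∈ P := by
  rw [mem_P_iff hPV h0 hPW]
  intro η hη
  rw [pairR_add_right, pairR_smul_right]
  by_cases he : η = rootNormal P v
  · rw [he, pair_rootNormal_self hv]
    have := ht1
    rw [he] at *
    linarith
  · have h1 : -1 ≤ pairR η x := dual_pair (W_subset_dual hPW η hη) hx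
    have h2 : 0 ≤ pairR η v := pair_nonneg_of_ne_rootNormal hPV hW hPW hv hη he
    nlinarith
lemma IsLatticePt.sub {x y : Fin d → ℝ} (hx : IsLatticePt x) (hy : IsLatticePt y) :
    IsLatticePt (x - y) := by
  rw [sub_eq_add_neg]; exact hx.add hy.neg

/-- Two facet normals of a semisimple pair are distinct. -/
lemma rootNormal_ne (hv : IsRoot P v) (hv' : IsRoot P (-v)) :
    rootNormal P v ≠ rootNormal P (-v) := by
  intro h
  have h1 : pairR (rootNormal P v) v = -1 := pair_rootNormal_self hv
  have h2 : pairR (rootNormal P (-v)) (-v) = -1 := pair_rootNormal_self hv'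
  rw [← h, pairR_neg_right] at h2
  linarith

/-- Profile of a semisimple root against dual vertices. -/
lemma pair_profile (hPV : P = convexHull ℝ (V : Set (Fin d → ℝ)))
    (hW : ∀ x ∈ W, IsLatticePt x)
    (hPW : polarDual P = convexHull ℝ (W : Set (Fin d → ℝ)))
    {v η : Fin d → ℝ} (hv : IsRoot P v) (hv' : IsRoot P (-v)) (hη : η ∈ W) :
    pairR η v = if η = rootNormal P v then -1 else
      if η = rootNormal P (-v) then 1 else 0 := by
  by_cases h1 : η = rootNormal P v
  · rw [if_pos h1, h1]; exact pair_rootNormal_self hv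
  · rw [if_neg h1]
    by_cases h2 : η = rootNormal P (-v)
    · rw [if_pos h2, h2]
      have := pair_rootNormal_self hv'
      rw [pairR_neg_right] at this
      linarith
    · rw [if_neg h2]
      have ha : 0 ≤ pairR η v := pair_nonneg_of_ne_rootNormal hPV hW hPW hv hη h1
      have hb : 0 ≤ pairR η (-v) := pair_nonneg_of_ne_rootNormal hPV hW hPW hv' hη h2
      rw [pairR_neg_right] at hb
      linarith

/-- The reflection associated with a semisimple root, as a linear map. -/
noncomputable def sRefl (P : Set (Fin d → ℝ)) (v : Fin d → ℝ) : (Fin d → ℝ) →ₗ[ℝ] (Fin d → ℝ) :=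
  LinearMap.id + (pairL (rootNormal P v - rootNormal P (-v))).smulRight v

lemma sRefl_apply (P : Set (Fin d → ℝ)) (v x : Fin d → ℝ) :
    sRefl P v x = x + (pairR (rootNormal P v - rootNormal P (-v)) x) • v := rfl

lemma pair_sRefl_self (hv : IsRoot P v) (hv' : IsRoot P (-v)) :
    pairR (rootNormal P v - rootNormal P (-v)) v = -2 := by
  have h1 : pairR (rootNormal P v) v = -1 := pair_rootNormal_self hv
  have h2 : pairR (rootNormal P (-v)) (-v) = -1 := pair_rootNormal_self hv'
  rw [pairR_neg_right] at h2
  rw [pairR_sub_left]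
  linarith

lemma sRefl_involutive (hv : IsRoot P v) (hv' : IsRoot P (-v)) :
    Function.Involutive (sRefl P v) := by
  intro x
  rw [sRefl_apply, sRefl_apply, pairR_add_right, pairR_smul_right,
    pair_sRefl_self hv hv']
  module

lemma sRefl_lattice (hPV : P = convexHull ℝ (V : Set (Fin d → ℝ)))
    (hW : ∀ x ∈ W, IsLatticePt x)
    (hPW : polarDual P = convexHull ℝ (W : Set (Fin d → ℝ)))
    {v x : Fin d → ℝ} (hv : IsRoot P v) (hv' : IsRoot P (-v))
    (hx : IsLatticePt x) : IsLatticePt (sRefl P v x) := by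
  rw [sRefl_apply]
  refine hx.add (hv.1.int_smul ?_)
  exact ((rootNormal_lattice hPV hW hPW hv).sub
    (rootNormal_lattice hPV hW hPW hv')).pairR_int hx

/-- The reflection of a semisimple root preserves `P`. -/
lemma sRefl_mem_P (hPV : P = convexHull ℝ (V : Set (Fin d → ℝ)))
    (h0 : (0 : Fin d → ℝ) ∈ interior P)
    (hW : ∀ x ∈ W, IsLatticePt x)
    (hPW : polarDual P = convexHull ℝ (W : Set (Fin d → ℝ)))
    {v x : Fin d → ℝ} (hv : IsRoot P v) (hv' : IsRoot P (-v))
    (hx : x ∈ P) : sRefl P v x ∈ P := by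
  rw [sRefl_apply, pairR_sub_left]
  set α := pairR (rootNormal P v) x with hα
  set β := pairR (rootNormal P (-v)) x with hβ
  have hα1 : -1 ≤ α := rootNormal_valid hv x hx
  have hβ1 : -1 ≤ β := rootNormal_valid hv' x hx
  rcases le_total β α with h | h
  · exact move_mem hPV h0 hW hPW hv hx (by linarith) (by linarith)
  · have : x + (α - β) • v = x + (β - α) • (-v) := by module
    rw [this]
    exact move_mem hPV h0 hW hPW hv' hx (by linarith) (by linarith)

/-- Intrinsic interiors are preserved by linear equivalences. -/
lemma intrinsicInterior_image_linearEquiv (e : (Fin d → ℝ) ≃ₗ[ℝ] (Fin d → ℝ))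
    {F : Set (Fin d → ℝ)} {x : Fin d → ℝ} (hx : x ∈ intrinsicInterior ℝ F) :
    e x ∈ intrinsicInterior ℝ (e '' F) := by
  obtain ⟨y, hy, rfl⟩ := hx
  have hspan : (affineSpan ℝ F).map (e : (Fin d → ℝ) →ₗ[ℝ] (Fin d → ℝ)).toAffineMap
      = affineSpan ℝ (e '' F) := by
    rw [AffineSubspace.map_span]
    rfl
  have hφm : ∀ a : affineSpan ℝ F, e a ∈ affineSpan ℝ (e '' F) := by
    intro a
    rw [← hspan]
    exact ⟨a, a.2, rfl⟩
  have hψm : ∀ b : affineSpan ℝ (e '' F), e.symm b ∈ affineSpan ℝ F := by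
    intro b
    have hb : (b : Fin d → ℝ) ∈ (affineSpan ℝ F).map
        (e : (Fin d → ℝ) →ₗ[ℝ] (Fin d → ℝ)).toAffineMap := by
      rw [hspan]; exact b.2
    rw [AffineSubspace.mem_map] at hb
    obtain ⟨a, ha, hab⟩ := hb
    have : e.symm b = a := by
      apply e.injective
      simp only [LinearEquiv.apply_symm_apply]
      exact hab.symm
    rw [this]
    exact ha
  set φ : affineSpan ℝ F → affineSpan ℝ (e '' F) := fun a => ⟨e a, hφm a⟩ with hφ
  set ψ : affineSpan ℝ (e '' F) → affineSpan ℝ F := fun b => ⟨e.symm b, hψm b⟩ with hψ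
  have hψc : Continuous ψ := by
    apply Continuous.subtype_mk
    exact ((e.symm : (Fin d → ℝ) →ₗ[ℝ] (Fin d → ℝ)).continuous_of_finiteDimensional).comp
      continuous_subtype_val
  refine ⟨φ y, ?_, rfl⟩
  have hsub : ψ ⁻¹' (interior ((↑) ⁻¹' F : Set (affineSpan ℝ F)))
      ⊆ ((↑) ⁻¹' (e '' F) : Set (affineSpan ℝ (e '' F))) := by
    intro b hb
    have h1 : ψ b ∈ ((↑) ⁻¹' F : Set (affineSpan ℝ F)) := interior_subset hb
    have : (ψ b : Fin d → ℝ) ∈ F := h1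
    have h2 : (b : Fin d → ℝ) = e (e.symm b) := by simp
    exact ⟨e.symm b, this, h2.symm⟩
  have hopen : IsOpen (ψ ⁻¹' (interior ((↑) ⁻¹' F : Set (affineSpan ℝ F)))) :=
    isOpen_interior.preimage hψc
  have hmem : φ y ∈ ψ ⁻¹' (interior ((↑) ⁻¹' F : Set (affineSpan ℝ F))) := by
    have : ψ (φ y) = y := by
      apply Subtype.ext
      simp [hφ, hψ]
    simp only [Set.mem_preimage, this]
    exact hy
  exact interior_maximal hsub hopen hmem
/-- Reflections of semisimple roots map roots to roots. -/
lemma sRefl_root (hPV : P = convexHull ℝ (V : Set (Fin d → ℝ)))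
    (h0 : (0 : Fin d → ℝ) ∈ interior P)
    (hW : ∀ x ∈ W, IsLatticePt x)
    (hPW : polarDual P = convexHull ℝ (W : Set (Fin d → ℝ)))
    (hv : IsRoot P v) (hv' : IsRoot P (-v))
    {m : Fin d → ℝ} (hm : IsRoot P m) : IsRoot P (sRefl P v m) := by
  set e : (Fin d → ℝ) ≃ₗ[ℝ] (Fin d → ℝ) :=
    LinearEquiv.ofInvolutive (sRefl P v) (sRefl_involutive hv hv') with he
  have hee : ∀ x, e x = sRefl P v x := fun x => rfl
  have hinv : ∀ x, sRefl P v (sRefl P v x) = x := sRefl_involutive hv hv'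
  have hPP : ∀ x, sRefl P v x ∈ P ↔ x ∈ P := by
    intro x
    constructor
    · intro h
      have := sRefl_mem_P hPV h0 hW hPW hv hv' h
      rwa [hinv] at this
    · exact sRefl_mem_P hPV h0 hW hPW hv hv'
  obtain ⟨⟨hval, hF, hne, hrank⟩, hrel⟩ := rootNormal_spec hm
  set η := rootNormal P m with hη
  set F := rootFacet P m with hFdef
  set w := rootNormal P v - rootNormal P (-v) with hw
  set η' := η + (pairR η v) • w with hη'
  have hkey : ∀ x, pairR η' x = pairR η (sRefl P v x) := by
    intro x
    rw [hη', sRefl_apply, pairR_add_left, pairR_smul_left, pairR_add_right,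
      pairR_smul_right]
    ring
  refine ⟨sRefl_lattice hPV hW hPW hv hv' hm.1, sRefl P v '' F, ⟨η', ?_, ?_, ?_, ?_⟩, ?_⟩
  · intro x hx
    rw [hkey]
    exact hval _ ((hPP x).mpr hx)
  · ext x
    constructor
    · rintro ⟨z, hz, rfl⟩
      rw [hF] at hz
      refine ⟨(hPP z).mpr hz.1, ?_⟩
      rw [hkey, hinv]
      exact hz.2
    · rintro ⟨hxP, hx1⟩
      refine ⟨sRefl P v x, ?_, hinv x⟩
      rw [hF]
      rw [hkey] at hx1
      exact ⟨(hPP x).mpr hxP, hx1⟩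
  · obtain ⟨z, hz⟩ := hne
    exact ⟨sRefl P v z, z, hz, rfl⟩
  · have h1 : sRefl P v '' F = (e : (Fin d → ℝ) →ₗ[ℝ] (Fin d → ℝ)).toAffineMap '' F := rfl
    rw [h1, ← AffineMap.vectorSpan_image_eq_submodule_map]
    have h2 : ((e : (Fin d → ℝ) →ₗ[ℝ] (Fin d → ℝ)).toAffineMap).linear
        = (e : (Fin d → ℝ) →ₗ[ℝ] (Fin d → ℝ)) := rfl
    rw [h2]
    rw [LinearEquiv.finrank_map_eq e (vectorSpan ℝ F)]
    exact hrank
  · have := intrinsicInterior_image_linearEquiv e hrel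
    rw [hee] at this
    convert this using 2
    rfl
/-- Roots with the same facet data are equal. -/
lemma root_uniq (hPV : P = convexHull ℝ (V : Set (Fin d → ℝ)))
    (h0 : (0 : Fin d → ℝ) ∈ interior P)
    (hW : ∀ x ∈ W, IsLatticePt x)
    (hPW : polarDual P = convexHull ℝ (W : Set (Fin d → ℝ)))
    {u u' : Fin d → ℝ} (hu : IsRoot P u) (hu' : IsRoot P (-u))
    (hw : IsRoot P u') (hw' : IsRoot P (-u'))
    (h1 : rootNormal P u = rootNormal P u')
    (h2 : rootNormal P (-u) = rootNormal P (-u')) : u = u' := by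
  apply eq_of_pairW hPV h0 hPW
  intro η hη
  rw [pair_profile hPV hW hPW hu hu' hη, pair_profile hPV hW hPW hw hw' hη, h1, h2]

/-- Adding two semisimple roots sharing a facet vertex. -/
lemma edge_sum (hPV : P = convexHull ℝ (V : Set (Fin d → ℝ)))
    (h0 : (0 : Fin d → ℝ) ∈ interior P)
    (hW : ∀ x ∈ W, IsLatticePt x)
    (hPW : polarDual P = convexHull ℝ (W : Set (Fin d → ℝ)))
    {v w : Fin d → ℝ}
    (hv : IsRoot P v) (hv' : IsRoot P (-v)) (hw : IsRoot P w) (hw' : IsRoot P (-w))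
    (hq : rootNormal P (-v) = rootNormal P w)
    (hpr : rootNormal P v ≠ rootNormal P (-w)) :
    (IsRoot P (v + w) ∧ IsRoot P (-(v + w))) ∧
      rootNormal P (v + w) = rootNormal P v ∧
      rootNormal P (-(v + w)) = rootNormal P (-w) := by
  have hpq : rootNormal P v ≠ rootNormal P (-v) := rootNormal_ne hv hv'
  have hqr : rootNormal P w ≠ rootNormal P (-w) := rootNormal_ne hw hw'
  have hpW : rootNormal P v ∈ W := rootNormal_mem_W hPV hPW hv
  have hqW : rootNormal P w ∈ W := rootNormal_mem_W hPV hPW hw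
  have hrW : rootNormal P (-w) ∈ W := rootNormal_mem_W hPV hPW hw'
  -- the reflection in `w` sends `v` to `v + w`
  have hcoef : pairR (rootNormal P w - rootNormal P (-w)) v = 1 := by
    rw [pairR_sub_left]
    rw [pair_profile hPV hW hPW hv hv' hqW, pair_profile hPV hW hPW hv hv' hrW]
    rw [if_neg (by rw [← hq]; exact fun h => hpq h.symm),
      if_pos hq.symm,
      if_neg (fun h => hpr h.symm),
      if_neg (by rw [hq]; exact fun h => hqr h.symm)]
    norm_num
  have huv : sRefl P w v = v + w := by
    rw [sRefl_apply, hcoef, one_smul]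
  have root1 : IsRoot P (v + w) := by
    rw [← huv]; exact sRefl_root hPV h0 hW hPW hw hw' hv
  have huv' : sRefl P w (-v) = -(v + w) := by
    rw [map_neg, huv]
  have root2 : IsRoot P (-(v + w)) := by
    rw [← huv']; exact sRefl_root hPV h0 hW hPW hw hw' hv'
  refine ⟨⟨root1, root2⟩, ?_, ?_⟩
  · refine (eq_rootNormal hPV root1 (W_subset_dual hPW _ hpW) ?_).symm
    rw [pairR_add_right, pair_rootNormal_self hv,
      pair_profile hPV hW hPW hw hw' hpW,
      if_neg (by rw [← hq]; exact fun h => hpq h),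
      if_neg hpr]
    norm_num
  · refine (eq_rootNormal hPV root2 (W_subset_dual hPW _ hrW) ?_).symm
    rw [pairR_neg_right, pairR_add_right,
      pair_profile hPV hW hPW hv hv' hrW,
      if_neg (fun h => hpr h.symm),
      if_neg (by rw [hq]; exact fun h => hqr h.symm),
      pair_profile hPV hW hPW hw hw' hrW,
      if_neg (fun h => hqr h.symm), if_pos rfl]
    norm_num
variable (P) in
/-- Two dual vertices are joined by an edge if some semisimple root has them as its
pair of facet normals. -/
def Edge (p q : Fin d → ℝ) : Prop :=
  ∃ u, (IsRoot P u ∧ IsRoot P (-u)) ∧ rootNormal P u = p ∧ rootNormal P (-u) = q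

variable (P) in
def relc (p q : Fin d → ℝ) : Prop := p = q ∨ Edge P p q

variable (P) in
noncomputable def repc (p : Fin d → ℝ) : Fin d → ℝ := Classical.epsilon (relc P p)

variable (P) in
noncomputable def ssR (p q : Fin d → ℝ) : Fin d → ℝ :=
  Classical.epsilon (fun u => (IsRoot P u ∧ IsRoot P (-u)) ∧
    rootNormal P u = p ∧ rootNormal P (-u) = q)

lemma ssR_spec {p q : Fin d → ℝ} (h : Edge P p q) :
    (IsRoot P (ssR P p q) ∧ IsRoot P (-(ssR P p q))) ∧
      rootNormal P (ssR P p q) = p ∧ rootNormal P (-(ssR P p q)) = q :=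
  Classical.epsilon_spec h

lemma edge_ne {p q : Fin d → ℝ} (h : Edge P p q) : p ≠ q := by
  obtain ⟨u, ⟨hu, hu'⟩, h1, h2⟩ := h
  rw [← h1, ← h2]
  exact rootNormal_ne hu hu'

lemma edge_symm {p q : Fin d → ℝ} (h : Edge P p q) : Edge P q p := by
  obtain ⟨u, ⟨hu, hu'⟩, h1, h2⟩ := h
  exact ⟨-u, ⟨hu', by rwa [neg_neg]⟩, h2, by rwa [neg_neg]⟩

lemma edge_mem_W (hPV : P = convexHull ℝ (V : Set (Fin d → ℝ)))
    (hPW : polarDual P = convexHull ℝ (W : Set (Fin d → ℝ)))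
    {p q : Fin d → ℝ} (h : Edge P p q) : p ∈ W ∧ q ∈ W := by
  obtain ⟨u, ⟨hu, hu'⟩, h1, h2⟩ := h
  exact ⟨h1 ▸ rootNormal_mem_W hPV hPW hu, h2 ▸ rootNormal_mem_W hPV hPW hu'⟩

lemma relc_refl (p : Fin d → ℝ) : relc P p p := Or.inl rfl

lemma relc_symm {p q : Fin d → ℝ} (h : relc P p q) : relc P q p := by
  rcases h with h | h
  · exact Or.inl h.symm
  · exact Or.inr (edge_symm h)

lemma relc_trans (hPV : P = convexHull ℝ (V : Set (Fin d → ℝ)))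
    (h0 : (0 : Fin d → ℝ) ∈ interior P)
    (hW : ∀ x ∈ W, IsLatticePt x)
    (hPW : polarDual P = convexHull ℝ (W : Set (Fin d → ℝ)))
    {p q r : Fin d → ℝ} (h1 : relc P p q) (h2 : relc P q r) : relc P p r := by
  rcases h1 with rfl | h1
  · exact h2
  rcases h2 with rfl | h2
  · exact Or.inr h1
  by_cases hpr : p = r
  · exact Or.inl hpr
  obtain ⟨u1, ⟨hu1, hu1'⟩, e11, e12⟩ := h1
  obtain ⟨u2, ⟨hu2, hu2'⟩, e21, e22⟩ := h2
  have hsum := edge_sum hPV h0 hW hPW hu1 hu1' hu2 hu2'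
    (by rw [e12, e21]) (by rw [e11, e22]; exact hpr)
  exact Or.inr ⟨u1 + u2, hsum.1, by rw [hsum.2.1, e11], by rw [hsum.2.2, e22]⟩

lemma repc_rel (p : Fin d → ℝ) : relc P p (repc P p) :=
  Classical.epsilon_spec ⟨p, relc_refl p⟩

lemma repc_eq (hPV : P = convexHull ℝ (V : Set (Fin d → ℝ)))
    (h0 : (0 : Fin d → ℝ) ∈ interior P)
    (hW : ∀ x ∈ W, IsLatticePt x)
    (hPW : polarDual P = convexHull ℝ (W : Set (Fin d → ℝ)))
    {p q : Fin d → ℝ} (h : relc P p q) : repc P p = repc P q := by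
  unfold repc
  congr 1
  funext x
  apply propext
  constructor
  · intro hx
    exact relc_trans hPV h0 hW hPW (relc_symm h) hx
  · intro hx
    exact relc_trans hPV h0 hW hPW h hx

lemma ite_helper {α : Type*} [DecidableEq α] {t p q r : α}
    (hpq : p ≠ q) (hpr : p ≠ r) (hqr : q ≠ r) :
    (if t = p then (-1:ℝ) else if t = q then 1 else 0) =
      (if t = p then (-1:ℝ) else if t = r then 1 else 0) -
      (if t = q then (-1:ℝ) else if t = r then 1 else 0) := by
  by_cases h1 : t = p <;> by_cases h2 : t = q <;> by_cases h3 : t = r <;>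
    simp_all <;> norm_num

lemma ite_helper2 {α : Type*} [DecidableEq α] {t p q : α} (hpq : p ≠ q) :
    (if t = p then (-1:ℝ) else if t = q then 1 else 0) =
      (if t = q then (1:ℝ) else 0) - (if t = p then 1 else 0) := by
  by_cases h1 : t = p <;> by_cases h2 : t = q <;> simp_all <;> norm_num

end Roots

/-- Every reflexive polytope `P` admits an `S`-root basis: a pairwise orthogonal set `B`
of semisimple roots with `S = R ∩ lin_ℝ(B)`; in particular `B` is an `ℝ`-basis of
`lin_ℝ(S)` and `R ∩ lin_ℝ(S) = S`. -/
theorem stmt7 {d : ℕ} (P : Set (Fin d → ℝ)) (hP : IsReflexive P) :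
    ∃ B : Finset (Fin d → ℝ),
      (∀ b ∈ B, IsRoot P b ∧ IsRoot P (-b)) ∧
      (∀ b ∈ B, ∀ b' ∈ B, b ≠ b' →
        pairR (rootNormal P b) b' = 0 ∧ pairR (rootNormal P b') b = 0) ∧
      {m | IsRoot P m ∧ IsRoot P (-m)} =
        {m | IsRoot P m} ∩ ↑(Submodule.span ℝ (B : Set (Fin d → ℝ))) ∧
      LinearIndependent ℝ (fun x : ↥(B : Set (Fin d → ℝ)) => (x : Fin d → ℝ)) ∧
      Submodule.span ℝ (B : Set (Fin d → ℝ)) =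
        Submodule.span ℝ {m | IsRoot P m ∧ IsRoot P (-m)} ∧
      {m | IsRoot P m} ∩ ↑(Submodule.span ℝ {m | IsRoot P m ∧ IsRoot P (-m)}) =
        {m | IsRoot P m ∧ IsRoot P (-m)} := by
  classical
  obtain ⟨⟨V, hV, hPV⟩, h0, W, hW, hPW⟩ := hP
  set B : Finset (Fin d → ℝ) :=
    (W.filter (fun p => Edge P p (repc P p))).image (fun p => ssR P p (repc P p)) with hBdef
  have hBmem : ∀ b ∈ B, (IsRoot P b ∧ IsRoot P (-b)) ∧
      rootNormal P b ∈ W ∧ Edge P (rootNormal P b) (repc P (rootNormal P b)) ∧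
      rootNormal P (-b) = repc P (rootNormal P b) ∧
      b = ssR P (rootNormal P b) (repc P (rootNormal P b)) := by
    intro b hb
    rw [hBdef, Finset.mem_image] at hb
    obtain ⟨p, hpfil, rfl⟩ := hb
    rw [Finset.mem_filter] at hpfil
    obtain ⟨hpW, hpe⟩ := hpfil
    have hs := ssR_spec hpe
    refine ⟨hs.1, ?_, ?_, ?_, ?_⟩ <;> rw [hs.2.1]
    exacts [hpW, hpe, hs.2.2]
  have horth : ∀ b ∈ B, ∀ b' ∈ B, b ≠ b' → pairR (rootNormal P b) b' = 0 := by
    intro b hb b' hb' hne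
    obtain ⟨⟨hbr, hbr'⟩, hbW, hbe, hbrep, hbeq⟩ := hBmem b hb
    obtain ⟨⟨hcr, hcr'⟩, hcW, hce, hcrep, hceq⟩ := hBmem b' hb'
    have h1 : rootNormal P b ≠ rootNormal P b' := by
      intro h
      apply hne
      rw [hbeq, hceq, h]
    have h2 : rootNormal P b ≠ rootNormal P (-b') := by
      intro h
      rw [hcrep] at h
      have hr1 : relc P (rootNormal P b') (rootNormal P b) := h ▸ repc_rel _
      have hr2 : repc P (rootNormal P b') = repc P (rootNormal P b) :=
        repc_eq hPV h0 hW hPW hr1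
      have : repc P (rootNormal P b) = rootNormal P b := by rw [← hr2, ← h]
      exact edge_ne hbe this.symm
    rw [pair_profile hPV hW hPW hcr hcr' hbW, if_neg h1, if_neg h2]
  have hspan : ∀ m, IsRoot P m → IsRoot P (-m) →
      m ∈ Submodule.span ℝ (B : Set (Fin d → ℝ)) := by
    intro m hm hm'
    have hedge : Edge P (rootNormal P m) (rootNormal P (-m)) := ⟨m, ⟨hm, hm'⟩, rfl, rfl⟩
    set p := rootNormal P m with hp
    set q := rootNormal P (-m) with hq
    have hpW : p ∈ W := rootNormal_mem_W hPV hPW hm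
    have hqW : q ∈ W := rootNormal_mem_W hPV hPW hm'
    have hrelpq : relc P p q := Or.inr hedge
    have hrq : repc P p = repc P q := repc_eq hPV h0 hW hPW hrelpq
    by_cases hqr : q = repc P p
    · have hpe : Edge P p (repc P p) := hqr ▸ hedge
      have hbB : ssR P p (repc P p) ∈ B := by
        rw [hBdef]; exact Finset.mem_image_of_mem _ (Finset.mem_filter.mpr ⟨hpW, hpe⟩)
      have hs := ssR_spec hpe
      have hmeq : m = ssR P p (repc P p) :=
        root_uniq hPV h0 hW hPW hm hm' hs.1.1 hs.1.2 hs.2.1.symm (by rw [hs.2.2, ← hqr])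
      rw [hmeq]
      exact Submodule.subset_span hbB
    · by_cases hpr : p = repc P p
      · have hedge' : Edge P q p := edge_symm hedge
        have hqe : Edge P q (repc P q) := by rw [← hrq, ← hpr]; exact hedge'
        have hbB : ssR P q (repc P q) ∈ B := by
          rw [hBdef]; exact Finset.mem_image_of_mem _ (Finset.mem_filter.mpr ⟨hqW, hqe⟩)
        have hs := ssR_spec hqe
        have hmm : -m = ssR P q (repc P q) := by
          apply root_uniq hPV h0 hW hPW hm' (by rwa [neg_neg]) hs.1.1 hs.1.2 hs.2.1.symm
          rw [hs.2.2, ← hrq, ← hpr, neg_neg]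
        have hmeq : m = -(ssR P q (repc P q)) := by rw [← hmm, neg_neg]
        rw [hmeq]
        exact Submodule.neg_mem _ (Submodule.subset_span hbB)
      · have e1 : Edge P p (repc P p) := by
          rcases repc_rel (P := P) p with h | h
          · exact absurd h hpr
          · exact h
        have e2 : Edge P q (repc P q) := by
          rcases repc_rel (P := P) q with h | h
          · rw [← hrq] at h; exact absurd h hqr
          · exact h
        have hb1 : ssR P p (repc P p) ∈ B := by
          rw [hBdef]; exact Finset.mem_image_of_mem _ (Finset.mem_filter.mpr ⟨hpW, e1⟩)
        have hb2 : ssR P q (repc P q) ∈ B := by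
          rw [hBdef]; exact Finset.mem_image_of_mem _ (Finset.mem_filter.mpr ⟨hqW, e2⟩)
        have hs1 := ssR_spec e1
        have hs2 := ssR_spec e2
        have hmeq : m = ssR P p (repc P p) - ssR P q (repc P q) := by
          apply eq_of_pairW hPV h0 hPW
          intro t htW
          rw [pairR_sub_right,
            pair_profile hPV hW hPW hm hm' htW,
            pair_profile hPV hW hPW hs1.1.1 hs1.1.2 htW,
            pair_profile hPV hW hPW hs2.1.1 hs2.1.2 htW,
            hs1.2.1, hs1.2.2, hs2.2.1, hs2.2.2, ← hrq]
          have hpq : p ≠ q := edge_ne hedge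
          exact ite_helper hpq hpr hqr
        rw [hmeq]
        exact Submodule.sub_mem _ (Submodule.subset_span hb1) (Submodule.subset_span hb2)
  have hacct : ∀ m, IsRoot P m → m ∈ Submodule.span ℝ (B : Set (Fin d → ℝ)) →
      IsRoot P (-m) := by
    intro m hm hms
    obtain ⟨f, -, hf⟩ := Submodule.mem_span_finset.mp hms
    have hexp : ∀ t : Fin d → ℝ, pairR t m = ∑ b ∈ B, f b * pairR t b := by
      intro t
      rw [← hf]
      calc pairR t (∑ b ∈ B, f b • b) = ∑ b ∈ B, pairR t (f b • b) :=
            map_sum (pairL t) (fun b => f b • b) B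
        _ = ∑ b ∈ B, f b * pairR t b :=
            Finset.sum_congr rfl fun b _ => pairR_smul_right t (f b) b
    have hBprof : ∀ b ∈ B, ∀ t ∈ W, pairR t b =
        (if t = rootNormal P (-b) then (1:ℝ) else 0) -
          (if t = rootNormal P b then 1 else 0) := by
      intro b hb t htW
      obtain ⟨⟨hbr, hbr'⟩, -, -, -, -⟩ := hBmem b hb
      rw [pair_profile hPV hW hPW hbr hbr' htW]
      have hne := rootNormal_ne hbr hbr'
      exact ite_helper2 hne
    have hclass : ∀ q0, (∑ t ∈ W.filter (relc P q0), pairR t m) = 0 := by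
      intro q0
      rw [Finset.sum_congr rfl fun t _ => hexp t, Finset.sum_comm]
      apply Finset.sum_eq_zero
      intro b hb
      rw [← Finset.mul_sum]
      have hsplit : ∑ t ∈ W.filter (relc P q0), pairR t b = 0 := by
        rw [Finset.sum_congr rfl (fun t ht => hBprof b hb t (Finset.mem_filter.mp ht).1),
          Finset.sum_sub_distrib,
          Finset.sum_ite_eq' (W.filter (relc P q0)) (rootNormal P (-b)) (fun _ => (1:ℝ)),
          Finset.sum_ite_eq' (W.filter (relc P q0)) (rootNormal P b) (fun _ => (1:ℝ))]
        obtain ⟨⟨hbr, hbr'⟩, hbW, -, -, -⟩ := hBmem b hb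
        have hbW' : rootNormal P (-b) ∈ W := rootNormal_mem_W hPV hPW hbr'
        have hedgeb : Edge P (rootNormal P b) (rootNormal P (-b)) :=
          ⟨b, ⟨hbr, hbr'⟩, rfl, rfl⟩
        have hiff : (rootNormal P (-b) ∈ W.filter (relc P q0)) ↔
            (rootNormal P b ∈ W.filter (relc P q0)) := by
          rw [Finset.mem_filter, Finset.mem_filter]
          constructor
          · rintro ⟨-, h⟩
            exact ⟨hbW, relc_trans hPV h0 hW hPW h (relc_symm (Or.inr hedgeb))⟩
          · rintro ⟨-, h⟩
            exact ⟨hbW', relc_trans hPV h0 hW hPW h (Or.inr hedgeb)⟩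
        by_cases hc : rootNormal P (-b) ∈ W.filter (relc P q0)
        · rw [if_pos hc, if_pos (hiff.mp hc)]; ring
        · rw [if_neg hc, if_neg (fun hh => hc (hiff.mpr hh))]; ring
      rw [hsplit, mul_zero]
    set p := rootNormal P m with hp
    have hpW : p ∈ W := rootNormal_mem_W hPV hPW hm
    have hpm : pairR p m = -1 := pair_rootNormal_self hm
    set Kp := W.filter (relc P p) with hKp
    have hpK : p ∈ Kp := Finset.mem_filter.mpr ⟨hpW, relc_refl p⟩
    have hsum0 : ∑ t ∈ Kp, pairR t m = 0 := hclass p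
    have herase : ∑ t ∈ Kp.erase p, pairR t m = 1 := by
      have h5 := Finset.sum_erase_add Kp (fun t => pairR t m) hpK
      beta_reduce at h5
      rw [hpm] at h5
      linarith [h5, hsum0]
    have hnn : ∀ t ∈ Kp.erase p, 0 ≤ pairR t m := by
      intro t ht
      exact pair_nonneg_of_ne_rootNormal hPV hW hPW hm
        (Finset.mem_filter.mp (Finset.mem_of_mem_erase ht)).1 (Finset.ne_of_mem_erase ht)
    obtain ⟨q0, hq0K, hq0ne⟩ : ∃ q0 ∈ Kp.erase p, pairR q0 m ≠ 0 := by
      by_contra hall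
      push_neg at hall
      rw [Finset.sum_eq_zero hall] at herase
      norm_num at herase
    have hq0W : q0 ∈ W := (Finset.mem_filter.mp (Finset.mem_of_mem_erase hq0K)).1
    have hge1 : 1 ≤ pairR q0 m := by
      obtain ⟨n, hn⟩ := (hW q0 hq0W).pairR_int hm.1
      have h1 := hnn q0 hq0K
      rw [hn] at h1 hq0ne ⊢
      have hn0 : 0 ≤ n := by exact_mod_cast h1
      have hn1 : n ≠ 0 := by
        intro h; apply hq0ne; rw [h]; norm_num
      have : (1:ℤ) ≤ n := by omega
      exact_mod_cast this
    have hrest : ∑ t ∈ (Kp.erase p).erase q0, pairR t m = 1 - pairR q0 m := by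
      have h6 := Finset.sum_erase_add (Kp.erase p) (fun t => pairR t m) hq0K
      beta_reduce at h6
      linarith [h6, herase]
    have hnn2 : ∀ t ∈ (Kp.erase p).erase q0, 0 ≤ pairR t m :=
      fun t ht => hnn t (Finset.mem_of_mem_erase ht)
    have hq0eq : pairR q0 m = 1 := by
      have := Finset.sum_nonneg hnn2
      rw [hrest] at this
      linarith
    have hzero : ∀ t ∈ Kp.erase p, t ≠ q0 → pairR t m = 0 := by
      intro t ht htq
      have hsz : ∑ t ∈ (Kp.erase p).erase q0, pairR t m = 0 := by
        rw [hrest, hq0eq]; ring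
      exact (Finset.sum_eq_zero_iff_of_nonneg hnn2).mp hsz t
        (Finset.mem_erase.mpr ⟨htq, ht⟩)
    have hq0p : q0 ≠ p := Finset.ne_of_mem_erase hq0K
    have hq0rel : relc P p q0 := (Finset.mem_filter.mp (Finset.mem_of_mem_erase hq0K)).2
    have hedge : Edge P p q0 := by
      rcases hq0rel with h | h
      · exact absurd h.symm hq0p
      · exact h
    obtain ⟨u, ⟨hu, hu'⟩, hup, huq⟩ := hedge
    have hmu : m = u := by
      apply eq_of_pairW hPV h0 hPW
      intro t htW
      rw [pair_profile hPV hW hPW hu hu' htW, hup, huq]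
      by_cases h1 : t = p
      · rw [if_pos h1, h1, hpm]
      · rw [if_neg h1]
        by_cases h2 : t = q0
        · rw [if_pos h2, h2, hq0eq]
        · rw [if_neg h2]
          by_cases h3 : relc P p t
          · exact hzero t (Finset.mem_erase.mpr ⟨h1, Finset.mem_filter.mpr ⟨htW, h3⟩⟩) h2
          · have hcl := hclass t
            have hnn3 : ∀ s ∈ W.filter (relc P t), 0 ≤ pairR s m := by
              intro s hs
              obtain ⟨hsW, hst⟩ := Finset.mem_filter.mp hs
              apply pair_nonneg_of_ne_rootNormal hPV hW hPW hm hsW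
              intro hsp
              rw [hsp] at hst
              exact h3 (relc_symm hst)
            exact (Finset.sum_eq_zero_iff_of_nonneg hnn3).mp hcl t
              (Finset.mem_filter.mpr ⟨htW, relc_refl t⟩)
    rw [hmu]
    exact hu'
  have hlin : LinearIndependent ℝ (fun x : ↥(B : Set (Fin d → ℝ)) => (x : Fin d → ℝ)) := by
    rw [linearIndependent_iff']
    intro s g hsum i hi
    have happ := congrArg (pairL (rootNormal P (i : Fin d → ℝ))) hsum
    rw [map_sum, map_zero] at happ
    have hterm : ∀ j ∈ s, j ≠ i →
        pairL (rootNormal P (i : Fin d → ℝ)) (g j • (j : Fin d → ℝ)) = 0 := by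
      intro j hj hne
      rw [LinearMap.map_smul]
      have hiB : (i : Fin d → ℝ) ∈ B := by exact_mod_cast i.2
      have hjB : (j : Fin d → ℝ) ∈ B := by exact_mod_cast j.2
      have h7 : pairR (rootNormal P (i : Fin d → ℝ)) (j : Fin d → ℝ) = 0 :=
        horth _ hiB _ hjB (fun h => hne (Subtype.ext h).symm)
      simp [h7]
    rw [Finset.sum_eq_single_of_mem i hi hterm] at happ
    rw [LinearMap.map_smul] at happ
    have hiB : (i : Fin d → ℝ) ∈ B := by exact_mod_cast i.2
    obtain ⟨⟨hir, hir'⟩, -, -, -, -⟩ := hBmem _ hiB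
    have h8 : pairL (rootNormal P (i : Fin d → ℝ)) (i : Fin d → ℝ) = -1 := by
      rw [pairL_apply]
      exact pair_rootNormal_self hir
    rw [h8] at happ
    simp only [smul_eq_mul] at happ
    linarith [happ]
  have hCond3 : {m | IsRoot P m ∧ IsRoot P (-m)} =
      {m | IsRoot P m} ∩ ↑(Submodule.span ℝ (B : Set (Fin d → ℝ))) := by
    ext m
    constructor
    · rintro ⟨hm, hm'⟩
      exact ⟨hm, hspan m hm hm'⟩
    · rintro ⟨hm, hms⟩
      exact ⟨hm, hacct m hm hms⟩
  have hCond5 : Submodule.span ℝ (B : Set (Fin d → ℝ)) =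
      Submodule.span ℝ {m | IsRoot P m ∧ IsRoot P (-m)} := by
    apply le_antisymm
    · rw [Submodule.span_le]
      intro b hb
      exact Submodule.subset_span ((hBmem b (by exact_mod_cast hb)).1)
    · rw [Submodule.span_le]
      rintro m ⟨hm, hm'⟩
      exact hspan m hm hm'
  refine ⟨B, ?_, ?_, hCond3, hlin, hCond5, ?_⟩
  · intro b hb; exact (hBmem b hb).1
  · intro b hb b' hb' hne
    exact ⟨horth b hb b' hb' hne, horth b' hb' b hb hne.symm⟩
  · rw [← hCond5]
    exact hCond3.symm
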